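/- Let P_MH and P_DA be the Metropolis-Hastings and delayed-acceptance kernels built from the same proposal density q and target π, with acceptance probabilities α_MH(x,y) = min(1, π(y)q(y,x)/(π(x)q(x,y))) and α_DA(x,y) = min(1, π̂(y)q(y,x)/(π̂(x)q(x,y)))·min(1, (π(y)π̂(x))/(π(x)π̂(y))). Then for every f ∈ L²(π), the Dirichlet forms satisfy E_{P_DA}(f) ≤ E_{P_MH}(f), where E_P(f) = (1/2)∫∫ π(x)q(x,y)α(x,y)(f(x) − f(y))² dy dx. -/

import Mathlib

open MeasureTheory ENNReal

/-- The Dirichlet form `E_P(f) = (1/2)∬ π(x) q(x,y) α(x,y) (f(x)-f(y))² dy dx` of a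
propose-accept-reject kernel with target density `π`, proposal density `q` and
acceptance probability `α`. -/
noncomputable def dirichletForm {d : ℕ}
    (π : EuclideanSpace ℝ (Fin d) → ℝ)
    (q α : EuclideanSpace ℝ (Fin d) → EuclideanSpace ℝ (Fin d) → ℝ)
    (f : EuclideanSpace ℝ (Fin d) → ℝ) : ℝ≥0∞ :=
  (1/2) * ∫⁻ x, ∫⁻ y, ENNReal.ofReal (π x * q x y * α x y * (f x - f y) ^ 2)

lemma min_mul_min_le {a b : ℝ} (ha : 0 ≤ a) (hb : 0 ≤ b) :
    min 1 a * min 1 b ≤ min 1 (a * b) := by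
  rcases le_total a 1 with h1 | h1 <;> rcases le_total b 1 with h2 | h2 <;>
    simp only [min_eq_left, min_eq_right, h1, h2, le_min_iff] <;>
    constructor <;> nlinarith

theorem stmt_18 {d : ℕ} (π πhat : EuclideanSpace ℝ (Fin d) → ℝ)
    (hπ : ∀ x, 0 < π x) (hπhat : ∀ x, 0 < πhat x)
    (q : EuclideanSpace ℝ (Fin d) → EuclideanSpace ℝ (Fin d) → ℝ) (hq : ∀ x y, 0 < q x y)
    (αMH αDA : EuclideanSpace ℝ (Fin d) → EuclideanSpace ℝ (Fin d) → ℝ)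
    (hMH : ∀ x y, αMH x y = min 1 (π y * q y x / (π x * q x y)))
    (hDA : ∀ x y, αDA x y = min 1 (πhat y * q y x / (πhat x * q x y)) *
      min 1 ((π y * πhat x) / (π x * πhat y)))
    (πm : Measure (EuclideanSpace ℝ (Fin d)))
    (hπm : πm = volume.withDensity (fun x => ENNReal.ofReal (π x)))
    (f : EuclideanSpace ℝ (Fin d) → ℝ) (hf : MemLp f 2 πm) :
    dirichletForm π q αDA f ≤ dirichletForm π q αMH f := by
  unfold dirichletForm
  refine mul_le_mul_right (lintegral_mono fun x => lintegral_mono fun y => ?_) _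
  apply ENNReal.ofReal_le_ofReal
  have hα : αDA x y ≤ αMH x y := by
    rw [hMH, hDA]
    have := min_mul_min_le (a := πhat y * q y x / (πhat x * q x y))
      (b := π y * πhat x / (π x * πhat y))
      (div_nonneg (mul_nonneg (hπhat y).le (hq y x).le)
        (mul_nonneg (hπhat x).le (hq x y).le))
      (div_nonneg (mul_nonneg (hπ y).le (hπhat x).le)
        (mul_nonneg (hπ x).le (hπhat y).le))
    refine this.trans (le_of_eq ?_)
    congr 1
    have h1 := (hπ x).ne'
    have h2 := (hπhat x).ne'
    have h3 := (hπhat y).ne'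
    have h4 := (hq x y).ne'
    field_simp
  nlinarith [sq_nonneg (f x - f y), mul_pos (hπ x) (hq x y),
    mul_nonneg (mul_nonneg (hπ x).le (hq x y).le) (sq_nonneg (f x - f y))]
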